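/- Let T be a tree with diameter d ≥ 3 and diametrical path v₀,v₁,...,v_d. If there exists i ∈ {1,...,d−2} such that v_i is adjacent to a leaf other than v₀, and v_{i+1} is adjacent to a leaf other than v_d, then Γ_b(T) > diam(T). -/

import Mathlib

namespace AJC

variable {V : Type*}

/-- Eccentricity of a vertex: max distance to any vertex. -/
noncomputable def ecc [Fintype V] (G : SimpleGraph V) (v : V) : ℕ :=
  Finset.univ.sup (fun u => G.dist v u)

/-- Diameter: max eccentricity. -/
noncomputable def diam [Fintype V] (G : SimpleGraph V) : ℕ :=
  Finset.univ.sup (fun v => ecc G v)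

/-- Radius: minimum eccentricity. -/
noncomputable def rad [Fintype V] (G : SimpleGraph V) : ℕ :=
  sInf (Set.range (ecc G))

/-- A broadcast on `G`. -/
def IsBroadcast [Fintype V] (G : SimpleGraph V) (f : V → ℕ) : Prop :=
  ∀ v, f v ≤ ecc G v

/-- `u` hears the broadcast `f` (is dominated by `f`). -/
def Hears (G : SimpleGraph V) (f : V → ℕ) (u : V) : Prop :=
  ∃ v, 1 ≤ f v ∧ G.dist v u ≤ f v

/-- A dominating broadcast. -/
def IsDomBroadcast [Fintype V] (G : SimpleGraph V) (f : V → ℕ) : Prop :=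
  IsBroadcast G f ∧ ∀ u, Hears G f u

/-- A minimal dominating broadcast: no strictly smaller broadcast is dominating. -/
def IsMinDomBroadcast [Fintype V] (G : SimpleGraph V) (f : V → ℕ) : Prop :=
  IsDomBroadcast G f ∧ ∀ f' : V → ℕ, f' < f → ¬ IsDomBroadcast G f'

/-- The cost of a broadcast. -/
def cost [Fintype V] (f : V → ℕ) : ℕ := ∑ v, f v

/-- The upper broadcast domination number `Γ_b`. -/
noncomputable def upperBroadcastNum [Fintype V] (G : SimpleGraph V) : ℕ :=
  sSup {n | ∃ f : V → ℕ, IsMinDomBroadcast G f ∧ cost f = n}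

/-- The broadcast domination number `γ_b`. -/
noncomputable def broadcastNum [Fintype V] (G : SimpleGraph V) : ℕ :=
  sInf {n | ∃ f : V → ℕ, IsDomBroadcast G f ∧ cost f = n}

/-- The `f`-neighbourhood of `v`. -/
def Nf (G : SimpleGraph V) (f : V → ℕ) (v : V) : Set V := {u | G.dist v u ≤ f v}

/-- The `f`-boundary of `v`. -/
def Bf (G : SimpleGraph V) (f : V → ℕ) (v : V) : Set V := {u | G.dist v u = f v}

/-- The `f`-private neighbourhood of `v`. -/
def PN (G : SimpleGraph V) (f : V → ℕ) (v : V) : Set V :=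
  {u | G.dist v u ≤ f v ∧ ∀ w, w ≠ v → 1 ≤ f w → ¬ G.dist w u ≤ f w}

/-- The `f`-private boundary of `v`: vertices in `N_f[v]` not dominated once the
broadcast at `v` is decreased by one. -/
def PB [DecidableEq V] (G : SimpleGraph V) (f : V → ℕ) (v : V) : Set V :=
  {u | G.dist v u ≤ f v ∧ ¬ Hears G (Function.update f v (f v - 1)) u}

/-- A dominating set of vertices. -/
def IsDomSet (G : SimpleGraph V) (S : Finset V) : Prop :=
  ∀ v, v ∈ S ∨ ∃ u ∈ S, G.Adj u v

/-- A minimal dominating set. -/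
def IsMinDomSet (G : SimpleGraph V) (S : Finset V) : Prop :=
  IsDomSet G S ∧ ∀ T ⊂ S, ¬ IsDomSet G T

/-- An independent set of vertices. -/
def IsIndepSet (G : SimpleGraph V) (S : Finset V) : Prop :=
  ∀ u ∈ S, ∀ w ∈ S, u ≠ w → ¬ G.Adj u w

/-- The upper domination number `Γ`. -/
noncomputable def upperDomNum [Fintype V] (G : SimpleGraph V) : ℕ :=
  sSup {n | ∃ S : Finset V, IsMinDomSet G S ∧ S.card = n}

/-- The domination number `γ`. -/
noncomputable def domNum [Fintype V] (G : SimpleGraph V) : ℕ :=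
  sInf {n | ∃ S : Finset V, IsDomSet G S ∧ S.card = n}

/-- The independence number `α`. -/
noncomputable def indepNum [Fintype V] (G : SimpleGraph V) : ℕ :=
  sSup {n | ∃ S : Finset V, IsIndepSet G S ∧ S.card = n}

/-- Given a diametrical path `v 0, …, v d` of a tree, `sideTree G d v i` is the set of
vertices connected to `v i` by a path internally disjoint from the diametrical path. -/
def sideTree (G : SimpleGraph V) (d : ℕ) (v : ℕ → V) (i : ℕ) : Set V :=
  {x | ∃ p : G.Walk x (v i), p.IsPath ∧ ∀ y ∈ p.support, y ≠ v i → ∀ j ≤ d, v j ≠ y}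

/-- The diameter of the subtree `T_i`. -/
noncomputable def sideDiam (G : SimpleGraph V) (d : ℕ) (v : ℕ → V) (i : ℕ) : ℕ :=
  sSup {n | ∃ x ∈ sideTree G d v i, ∃ y ∈ sideTree G d v i, G.dist x y = n}

/-- The eccentricity of a vertex `x` within the subtree `T_i`. -/
noncomputable def sideEcc (G : SimpleGraph V) (d : ℕ) (v : ℕ → V) (i : ℕ) (x : V) : ℕ :=
  sSup {n | ∃ y ∈ sideTree G d v i, G.dist x y = n}

/-- A leaf of `G`. -/
def IsLeaf [Fintype V] (G : SimpleGraph V) [DecidableRel G.Adj] (x : V) : Prop :=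
  G.degree x = 1

/-- A stem: a vertex adjacent to a leaf. -/
def IsStem [Fintype V] (G : SimpleGraph V) [DecidableRel G.Adj] (x : V) : Prop :=
  ∃ l, IsLeaf G l ∧ G.Adj x l

/-- A strong stem: a vertex adjacent to at least two leaves. -/
def IsStrongStem [Fintype V] (G : SimpleGraph V) [DecidableRel G.Adj] (x : V) : Prop :=
  ∃ l₁ l₂, l₁ ≠ l₂ ∧ IsLeaf G l₁ ∧ IsLeaf G l₂ ∧ G.Adj x l₁ ∧ G.Adj x l₂


/-! ### Auxiliary material for Statement 6 -/

/-- In a tree, any path realizes the distance between its endpoints. -/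
private lemma tree_path_length {V : Type*} {G : SimpleGraph V} (hT : G.IsTree) {a b : V}
    (p : G.Walk a b) (hp : p.IsPath) : p.length = G.dist a b := by
  obtain ⟨q, hq, hql⟩ := hT.isConnected.exists_path_of_dist a b
  have h2 : (⟨p, hp⟩ : G.Path a b) = ⟨q, hq⟩ := hT.IsAcyclic.path_unique _ _
  rw [← hql]
  exact congrArg SimpleGraph.Walk.length (congrArg Subtype.val h2)

/-- The walk along consecutive vertices `v a, v (a+1), …, v (a+n)`. -/
private def segWalk {V : Type*} (G : SimpleGraph V) (v : ℕ → V) (a : ℕ) :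
    (n : ℕ) → (∀ j, j < n → G.Adj (v (a + j)) (v (a + j + 1))) → G.Walk (v a) (v (a + n))
  | 0, _ => SimpleGraph.Walk.nil
  | n + 1, h =>
      ((segWalk G v a n) fun j hj => h j (Nat.lt_succ_of_lt hj)).concat (h n n.lt_succ_self)

private lemma segWalk_length {V : Type*} (G : SimpleGraph V) (v : ℕ → V) (a : ℕ) :
    ∀ (n : ℕ) (h : ∀ j, j < n → G.Adj (v (a + j)) (v (a + j + 1))),
      (segWalk G v a n h).length = n
  | 0, _ => rfl
  | n + 1, h => by
      simp [segWalk, SimpleGraph.Walk.length_concat, segWalk_length G v a n _]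

private lemma segWalk_support {V : Type*} (G : SimpleGraph V) (v : ℕ → V) (a : ℕ) :
    ∀ (n : ℕ) (h : ∀ j, j < n → G.Adj (v (a + j)) (v (a + j + 1))),
      (segWalk G v a n h).support = (List.range (n + 1)).map (fun j => v (a + j))
  | 0, _ => by simp [segWalk, List.range_succ]
  | n + 1, h => by
      simp [segWalk, SimpleGraph.Walk.support_concat, segWalk_support G v a n _,
        List.range_succ]

/-- consecutive internal stems on a diametrical path force `Γ_b(T) > diam(T)`. -/
theorem stmt6 {V : Type*} [Fintype V] [DecidableEq V] (G : SimpleGraph V)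
    [DecidableRel G.Adj] (hT : G.IsTree) (d : ℕ) (v : ℕ → V)
    (hdiam : diam G = d)
    (hadj : ∀ i < d, G.Adj (v i) (v (i + 1)))
    (hinj : ∀ i ≤ d, ∀ j ≤ d, v i = v j → i = j)
    (hd3 : 3 ≤ d) (i : ℕ) (hi1 : 1 ≤ i) (hi2 : i ≤ d - 2)
    (l l' : V)
    (hl : IsLeaf G l) (hladj : G.Adj (v i) l) (hlne : l ≠ v 0)
    (hl' : IsLeaf G l') (hladj' : G.Adj (v (i + 1)) l') (hlne' : l' ≠ v d) :
    diam G < upperBroadcastNum G := by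
  classical
  have hconn : G.Connected := hT.isConnected
  have hid : i + 2 ≤ d := by omega
  -- distances along the diametrical path
  have hdistSeg : ∀ a n : ℕ, a + n ≤ d → G.dist (v a) (v (a + n)) = n := by
    intro a n hn
    have h : ∀ j, j < n → G.Adj (v (a + j)) (v (a + j + 1)) :=
      fun j hj => hadj (a + j) (by omega)
    have hp : (segWalk G v a n h).IsPath := by
      rw [SimpleGraph.Walk.isPath_def, segWalk_support]
      refine List.Nodup.map_on ?_ List.nodup_range
      intro x hx y hy hxy
      rw [List.mem_range] at hx hy
      have := hinj (a + x) (by omega) (a + y) (by omega) hxy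
      omega
    rw [← tree_path_length hT _ hp, segWalk_length]
  -- the leaf `l` has a unique neighbour
  have hlnbr : ∀ w, G.Adj w l → w = v i := by
    intro w hw
    have h1 : w ∈ G.neighborFinset l := by
      rw [SimpleGraph.mem_neighborFinset]; exact hw.symm
    have h2 : v i ∈ G.neighborFinset l := by
      rw [SimpleGraph.mem_neighborFinset]; exact hladj.symm
    by_contra hne
    have hlt : 1 < (G.neighborFinset l).card :=
      Finset.one_lt_card.mpr ⟨w, h1, v i, h2, hne⟩
    have : G.degree l = 1 := hl
    rw [SimpleGraph.degree] at this
    omega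
  have hlnbr' : ∀ w, G.Adj w l' → w = v (i + 1) := by
    intro w hw
    have h1 : w ∈ G.neighborFinset l' := by
      rw [SimpleGraph.mem_neighborFinset]; exact hw.symm
    have h2 : v (i + 1) ∈ G.neighborFinset l' := by
      rw [SimpleGraph.mem_neighborFinset]; exact hladj'.symm
    by_contra hne
    have hlt : 1 < (G.neighborFinset l').card :=
      Finset.one_lt_card.mpr ⟨w, h1, v (i + 1), h2, hne⟩
    have : G.degree l' = 1 := hl'
    rw [SimpleGraph.degree] at this
    omega
  -- the leaves avoid the diametrical path
  have hlv : ∀ j, j ≤ d → l ≠ v j := by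
    intro j hj heq
    rcases Nat.eq_zero_or_pos j with h0 | hpos
    · exact hlne (h0 ▸ heq)
    · have hA : G.Adj (v (j - 1)) l := by
        have := hadj (j - 1) (by omega)
        rw [show j - 1 + 1 = j by omega] at this
        rwa [← heq] at this
      have e1 : j - 1 = i := by
        have := hlnbr _ hA
        exact hinj (j - 1) (by omega) i (by omega) this
      by_cases hjd : j < d
      · have hB : G.Adj (v (j + 1)) l := by
          have := (hadj j hjd).symm
          rwa [← heq] at this
        have e2 : j + 1 = i := by
          have := hlnbr _ hB
          exact hinj (j + 1) (by omega) i (by omega) this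
        omega
      · omega
  have hlv' : ∀ j, j ≤ d → l' ≠ v j := by
    intro j hj heq
    by_cases hjd : j < d
    · have hB : G.Adj (v (j + 1)) l' := by
        have := (hadj j hjd).symm
        rwa [← heq] at this
      have e2 : j + 1 = i + 1 := by
        have := hlnbr' _ hB
        exact hinj (j + 1) (by omega) (i + 1) (by omega) this
      -- so j = i ≥ 1, hence v (j-1) is also adjacent to l'
      have hA : G.Adj (v (j - 1)) l' := by
        have := hadj (j - 1) (by omega)
        rw [show j - 1 + 1 = j by omega] at this
        rwa [← heq] at this
      have e1 : j - 1 = i + 1 := by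
        have := hlnbr' _ hA
        exact hinj (j - 1) (by omega) (i + 1) (by omega) this
      omega
    · have : j = d := by omega
      exact hlne' (this ▸ heq)
  -- key distance computations
  have hd0d : G.dist (v 0) (v d) = d := by
    have := hdistSeg 0 d (by omega); rwa [Nat.zero_add] at this
  have hd0i : G.dist (v 0) (v i) = i := by
    have := hdistSeg 0 i (by omega); rwa [Nat.zero_add] at this
  have hdd1 : G.dist (v d) (v (i + 1)) = d - i - 1 := by
    have := hdistSeg (i + 1) (d - i - 1) (by omega)
    rw [show i + 1 + (d - i - 1) = d by omega] at this
    rw [SimpleGraph.dist_comm]; exact this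
  -- distance from the leaves to the endpoints
  have hleafdist : ∀ (x : V) (a b : ℕ), a ≤ d → b ≤ d → G.Adj (v a) x →
      (∀ j, j ≤ d → x ≠ v j) → G.dist (v b) x = (max a b - min a b) + 1 := by
    intro x a b had hbd hxadj hxav
    rcases le_total b a with hba | hab
    · -- walk from v b up to v a, then to x
      have h : ∀ j, j < a - b → G.Adj (v (b + j)) (v (b + j + 1)) :=
        fun j hj => hadj (b + j) (by omega)
      have hW0 : (segWalk G v b (a - b) h).IsPath := by
        rw [SimpleGraph.Walk.isPath_def, segWalk_support]
        refine List.Nodup.map_on ?_ List.nodup_range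
        intro x hx y hy hxy
        rw [List.mem_range] at hx hy
        have := hinj (b + x) (by omega) (b + y) (by omega) hxy
        omega
      have hcast : v (b + (a - b)) = v a := by rw [show b + (a - b) = a by omega]
      set W0 : G.Walk (v b) (v a) := (segWalk G v b (a - b) h).copy rfl hcast with hW0def
      have hW0p : W0.IsPath := by
        rw [hW0def, SimpleGraph.Walk.isPath_def, SimpleGraph.Walk.support_copy,
          ← SimpleGraph.Walk.isPath_def]
        exact hW0
      have hWp : (W0.concat hxadj).IsPath := by
        rw [SimpleGraph.Walk.isPath_def, SimpleGraph.Walk.support_concat]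
        rw [List.nodup_append']
        refine ⟨hW0p.support_nodup, List.nodup_singleton _, ?_⟩
        intro y hy hy'
        rw [List.mem_singleton] at hy'
        subst hy'
        rw [hW0def, SimpleGraph.Walk.support_copy, segWalk_support, List.mem_map] at hy
        obtain ⟨j, hj, hje⟩ := hy
        rw [List.mem_range] at hj
        exact hxav (b + j) (by omega) hje.symm
      have := tree_path_length hT _ hWp
      rw [SimpleGraph.Walk.length_concat, hW0def, SimpleGraph.Walk.length_copy,
        segWalk_length] at this
      rw [← this]
      omega
    · -- walk from v b down to v a, then to x
      have h : ∀ j, j < b - a → G.Adj (v (a + j)) (v (a + j + 1)) :=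
        fun j hj => hadj (a + j) (by omega)
      have hW0 : (segWalk G v a (b - a) h).IsPath := by
        rw [SimpleGraph.Walk.isPath_def, segWalk_support]
        refine List.Nodup.map_on ?_ List.nodup_range
        intro x hx y hy hxy
        rw [List.mem_range] at hx hy
        have := hinj (a + x) (by omega) (a + y) (by omega) hxy
        omega
      have hcast : v (a + (b - a)) = v b := by rw [show a + (b - a) = b by omega]
      set W0 : G.Walk (v a) (v b) := (segWalk G v a (b - a) h).copy rfl hcast with hW0def
      have hW0p : W0.IsPath := by
        rw [hW0def, SimpleGraph.Walk.isPath_def, SimpleGraph.Walk.support_copy,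
          ← SimpleGraph.Walk.isPath_def]
        exact hW0
      have hWp : (W0.reverse.concat hxadj).IsPath := by
        rw [SimpleGraph.Walk.isPath_def, SimpleGraph.Walk.support_concat]
        rw [List.nodup_append']
        refine ⟨hW0p.reverse.support_nodup, List.nodup_singleton _, ?_⟩
        intro y hy hy'
        rw [List.mem_singleton] at hy'
        subst hy'
        rw [SimpleGraph.Walk.support_reverse, List.mem_reverse] at hy
        rw [hW0def, SimpleGraph.Walk.support_copy, segWalk_support, List.mem_map] at hy
        obtain ⟨j, hj, hje⟩ := hy
        rw [List.mem_range] at hj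
        exact hxav (a + j) (by omega) hje.symm
      have := tree_path_length hT _ hWp
      rw [SimpleGraph.Walk.length_concat, SimpleGraph.Walk.length_reverse, hW0def,
        SimpleGraph.Walk.length_copy, segWalk_length] at this
      rw [← this]
      omega
  have hd0l : G.dist (v 0) l = i + 1 := by
    have := hleafdist l i 0 (by omega) (by omega) hladj hlv
    simpa using this
  have hddl : G.dist (v d) l = d - i + 1 := by
    have := hleafdist l i d (by omega) le_rfl hladj hlv
    rw [this]; congr 1; omega
  have hd0l' : G.dist (v 0) l' = i + 2 := by
    have := hleafdist l' (i + 1) 0 (by omega) (by omega) hladj' hlv'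
    simpa using this
  have hddl' : G.dist (v d) l' = d - i := by
    have := hleafdist l' (i + 1) d (by omega) le_rfl hladj' hlv'
    rw [this]; omega
  have hne0d : v 0 ≠ v d := by
    intro h; have := hinj 0 (by omega) d le_rfl h; omega
  -- eccentricity bounds
  have hecc0 : d ≤ ecc G (v 0) := by
    have h : G.dist (v 0) (v d) ≤ ecc G (v 0) := Finset.le_sup (Finset.mem_univ (v d))
    rw [hd0d] at h; exact h
  have heccd : d ≤ ecc G (v d) := by
    have h : G.dist (v d) (v 0) ≤ ecc G (v d) := Finset.le_sup (Finset.mem_univ (v 0))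
    rw [SimpleGraph.dist_comm, hd0d] at h; exact h
  have heccs : ∀ s : V, s ≠ v 0 → 1 ≤ ecc G s := by
    intro s hs
    have h1 : 1 ≤ G.dist s (v 0) := hconn.pos_dist_of_ne hs
    have h : G.dist s (v 0) ≤ ecc G s := Finset.le_sup (Finset.mem_univ (v 0))
    omega
  -- the uncovered set and a minimal radius-1 cover of it
  set U : Finset V :=
    Finset.univ.filter (fun u => ¬(G.dist (v 0) u ≤ i + 1 ∨ G.dist (v d) u ≤ d - i)) with hUdef
  have hUmem : ∀ u : V, u ∈ U ↔ ¬(G.dist (v 0) u ≤ i + 1 ∨ G.dist (v d) u ≤ d - i) := by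
    intro u; rw [hUdef, Finset.mem_filter]; simp
  have hv0U : v 0 ∉ U := by
    simp only [hUmem, not_not]
    exact Or.inl (by rw [SimpleGraph.dist_self]; omega)
  have hvdU : v d ∉ U := by
    simp only [hUmem, not_not]
    exact Or.inr (by rw [SimpleGraph.dist_self]; omega)
  have hlU : l ∉ U := by
    simp only [hUmem, not_not]
    exact Or.inl (le_of_eq hd0l)
  have hviU : v i ∉ U := by
    simp only [hUmem, not_not]
    exact Or.inl (by rw [hd0i]; omega)
  have hl'U : l' ∉ U := by
    simp only [hUmem, not_not]
    exact Or.inr (le_of_eq hddl')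
  have hvi1U : v (i + 1) ∉ U := by
    simp only [hUmem, not_not]
    exact Or.inr (by rw [hdd1]; omega)
  -- minimal subcover
  set F : Finset (Finset V) :=
    U.powerset.filter (fun S => ∀ u ∈ U, ∃ s ∈ S, G.dist s u ≤ 1) with hFdef
  have hUF : U ∈ F := by
    rw [hFdef, Finset.mem_filter]
    exact ⟨Finset.mem_powerset_self U, fun u hu => ⟨u, hu, by simp [SimpleGraph.dist_self]⟩⟩
  obtain ⟨S, hSF, hSmin⟩ : ∃ S ∈ F, ∀ x ∈ F, ¬ x < S := by
    obtain ⟨S, hSF, hSm⟩ := Finset.exists_minimal (s := F) ⟨U, hUF⟩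
    exact ⟨S, hSF, fun x hx hlt => hlt.not_ge (hSm hx hlt.le)⟩
  have hSsub : S ⊆ U := Finset.mem_powerset.mp (Finset.mem_filter.mp hSF).1
  have hScov : ∀ u ∈ U, ∃ s ∈ S, G.dist s u ≤ 1 := (Finset.mem_filter.mp hSF).2
  have hSpriv : ∀ s ∈ S, ∃ u ∈ U, G.dist s u ≤ 1 ∧ ∀ t ∈ S, t ≠ s → ¬ G.dist t u ≤ 1 := by
    intro s hs
    by_cases hcov : ∀ u ∈ U, ∃ t ∈ S.erase s, G.dist t u ≤ 1
    · exfalso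
      have hmem : S.erase s ∈ F := by
        rw [hFdef, Finset.mem_filter]
        exact ⟨Finset.mem_powerset.mpr ((Finset.erase_subset _ _).trans hSsub), hcov⟩
      exact hSmin _ hmem (Finset.erase_ssubset hs)
    · push_neg at hcov
      obtain ⟨u, hu, hu2⟩ := hcov
      obtain ⟨t, ht, ht2⟩ := hScov u hu
      have hts : t = s := by
        by_contra hne
        have := hu2 t (Finset.mem_erase.mpr ⟨hne, ht⟩)
        omega
      subst hts
      refine ⟨u, hu, ht2, fun t' ht' hne hle1 => ?_⟩
      have := hu2 t' (Finset.mem_erase.mpr ⟨hne, ht'⟩)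
      omega
  -- the broadcast
  set f : V → ℕ := fun x =>
    if x = v 0 then i + 1 else if x = v d then d - i else if x ∈ S then 1 else 0 with hfdef
  have hf0 : f (v 0) = i + 1 := by rw [hfdef]; simp
  have hfd : f (v d) = d - i := by rw [hfdef]; simp [hne0d.symm]
  have hfS : ∀ s ∈ S, f s = 1 := by
    intro s hs
    have h0 : s ≠ v 0 := fun h => hv0U (h ▸ hSsub hs)
    have hd' : s ≠ v d := fun h => hvdU (h ▸ hSsub hs)
    rw [hfdef]; simp [h0, hd', hs]
  have hfcases : ∀ x : V, 1 ≤ f x → x = v 0 ∨ x = v d ∨ x ∈ S := by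
    intro x hx
    by_cases h0 : x = v 0
    · exact Or.inl h0
    by_cases hd' : x = v d
    · exact Or.inr (Or.inl hd')
    by_cases hS : x ∈ S
    · exact Or.inr (Or.inr hS)
    · rw [hfdef] at hx; simp [h0, hd', hS] at hx
  -- neighbours of leaves at distance ≤ 1
  have hnearl : ∀ w : V, G.dist w l ≤ 1 → w = l ∨ w = v i := by
    intro w hw
    rcases Nat.le_one_iff_eq_zero_or_eq_one.mp hw with h | h
    · exact Or.inl (hconn.dist_eq_zero_iff.mp h)
    · exact Or.inr (hlnbr w (SimpleGraph.dist_eq_one_iff_adj.mp h))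
  have hnearl' : ∀ w : V, G.dist w l' ≤ 1 → w = l' ∨ w = v (i + 1) := by
    intro w hw
    rcases Nat.le_one_iff_eq_zero_or_eq_one.mp hw with h | h
    · exact Or.inl (hconn.dist_eq_zero_iff.mp h)
    · exact Or.inr (hlnbr' w (SimpleGraph.dist_eq_one_iff_adj.mp h))
  -- f is a dominating broadcast
  have hbcast : IsBroadcast G f := by
    intro x
    rcases (le_or_gt 1 (f x)) with hx | hx
    · rcases hfcases x hx with h | h | h
      · subst h; rw [hf0]; omega
      · subst h; rw [hfd]; omega
      · rw [hfS x h]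
        exact heccs x (fun he => hv0U (he ▸ hSsub h))
    · omega
  have hdom : IsDomBroadcast G f := by
    refine ⟨hbcast, fun u => ?_⟩
    by_cases h1 : G.dist (v 0) u ≤ i + 1
    · exact ⟨v 0, by rw [hf0]; omega, by rw [hf0]; exact h1⟩
    by_cases h2 : G.dist (v d) u ≤ d - i
    · exact ⟨v d, by rw [hfd]; omega, by rw [hfd]; exact h2⟩
    · have hu : u ∈ U := (hUmem u).mpr (fun hor => hor.elim h1 h2)
      obtain ⟨s, hs, hsd⟩ := hScov u hu
      exact ⟨s, by rw [hfS s hs], by rw [hfS s hs]; exact hsd⟩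
  -- minimality
  have hmin : IsMinDomBroadcast G f := by
    refine ⟨hdom, fun f' hlt hdom' => ?_⟩
    obtain ⟨hle, x, hx⟩ := Pi.lt_def.mp hlt
    have hx1 : 1 ≤ f x := by omega
    rcases hfcases x hx1 with hc | hc | hc
    · -- reduce at v 0 : the leaf l becomes unheard
      subst hc
      rw [hf0] at hx
      obtain ⟨w, hw1, hw2⟩ := hdom'.2 l
      have hwle : f' w ≤ f w := hle w
      rcases hfcases w (le_trans hw1 hwle) with h | h | h
      · subst h
        rw [hd0l] at hw2
        omega
      · subst h
        rw [hfd] at hwle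
        rw [hddl] at hw2
        omega
      · have h1 : f' w ≤ 1 := by rw [← hfS w h]; exact hwle
        have hdl : G.dist w l ≤ 1 := le_trans hw2 h1
        rcases hnearl w hdl with he | he
        · exact hlU (he ▸ hSsub h)
        · exact hviU (he ▸ hSsub h)
    · -- reduce at v d : the leaf l' becomes unheard
      subst hc
      rw [hfd] at hx
      obtain ⟨w, hw1, hw2⟩ := hdom'.2 l'
      have hwle : f' w ≤ f w := hle w
      rcases hfcases w (le_trans hw1 hwle) with h | h | h
      · subst h
        rw [hf0] at hwle
        rw [hd0l'] at hw2
        omega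
      · subst h
        rw [hddl'] at hw2
        omega
      · have h1 : f' w ≤ 1 := by rw [← hfS w h]; exact hwle
        have hdl : G.dist w l' ≤ 1 := le_trans hw2 h1
        rcases hnearl' w hdl with he | he
        · exact hl'U (he ▸ hSsub h)
        · exact hvi1U (he ▸ hSsub h)
    · -- reduce at s ∈ S : its private vertex becomes unheard
      obtain ⟨u, huU, hud, hupriv⟩ := hSpriv x hc
      obtain ⟨w, hw1, hw2⟩ := hdom'.2 u
      have hwle : f' w ≤ f w := hle w
      have huU' := (hUmem u).mp huU
      push_neg at huU'
      rcases hfcases w (le_trans hw1 hwle) with h | h | h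
      · rw [h] at hw2 hwle
        rw [hf0] at hwle
        have := huU'.1
        omega
      · rw [h] at hw2 hwle
        rw [hfd] at hwle
        have := huU'.2
        omega
      · by_cases hws : w = x
        · subst hws
          rw [hfS w hc] at hx
          omega
        · have h1 : f' w ≤ 1 := by rw [← hfS w h]; exact hwle
          exact hupriv w h hws (le_trans hw2 h1)
  -- cost bound
  have hcost : d + 1 ≤ cost f := by
    have hsub : ({v 0, v d} : Finset V) ⊆ Finset.univ := Finset.subset_univ _
    have hsum : ∑ x ∈ ({v 0, v d} : Finset V), f x ≤ ∑ x, f x :=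
      Finset.sum_le_sum_of_subset hsub
    rw [Finset.sum_pair hne0d, hf0, hfd] at hsum
    have : (i + 1) + (d - i) = d + 1 := by omega
    rw [this] at hsum
    exact hsum
  -- conclude
  have hbdd : BddAbove {n | ∃ g : V → ℕ, IsMinDomBroadcast G g ∧ cost g = n} := by
    refine ⟨∑ x, ecc G x, ?_⟩
    rintro n ⟨g, hg, rfl⟩
    exact Finset.sum_le_sum (fun x _ => hg.1.1 x)
  have hmem : cost f ∈ {n | ∃ g : V → ℕ, IsMinDomBroadcast G g ∧ cost g = n} := ⟨f, hmin, rfl⟩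
  have hle' : cost f ≤ upperBroadcastNum G := le_csSup hbdd hmem
  rw [hdiam]
  omega

end AJC
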